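/- Let k be a strictly positive definite function on S and let X̲ be a finite set of distinct points in S. Then for every x ∈ S with x ∉ X̲, the Nyström approximation on the diagonal is strictly below the original function: k(x,X̲) k(X̲,X̲)^{-1} k(X̲,x) < k(x,x). -/

import Mathlib

/-- The Gram matrix `k(X̲,X̲)` of a kernel `k` at the landmark points `u 0, …, u (r-1)`. -/
noncomputable def gramMatrix {S : Type*} (k : S → S → ℝ) {r : ℕ} (u : Fin r → S) :
    Matrix (Fin r) (Fin r) ℝ :=
  Matrix.of fun a b => k (u a) (u b)

/-- The Nyström approximation `k(x,X̲) k(X̲,X̲)⁻¹ k(X̲,x')`. -/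
noncomputable def nystrom {S : Type*} (k : S → S → ℝ) {r : ℕ} (u : Fin r → S)
    (x x' : S) : ℝ :=
  ∑ a, ∑ b, k x (u a) * (gramMatrix k u)⁻¹ a b * k (u b) x'

/-- A symmetric function `k : S × S → ℝ` is positive definite if every quadratic form
`∑ᵢⱼ αᵢ αⱼ k(xᵢ,xⱼ)` is nonnegative. -/
def IsPosDefKernel {S : Type*} (k : S → S → ℝ) : Prop :=
  (∀ x x', k x x' = k x' x) ∧
  ∀ (n : ℕ) (x : Fin n → S) (α : Fin n → ℝ),
    0 ≤ ∑ i, ∑ j, α i * α j * k (x i) (x j)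

/-- A symmetric function `k : S × S → ℝ` is strictly positive definite if every quadratic
form `∑ᵢⱼ αᵢ αⱼ k(xᵢ,xⱼ)` at distinct points with not-all-zero coefficients is positive. -/
def IsStrictPosDefKernel {S : Type*} (k : S → S → ℝ) : Prop :=
  (∀ x x', k x x' = k x' x) ∧
  ∀ (n : ℕ) (x : Fin n → S) (α : Fin n → ℝ),
    Function.Injective x → α ≠ 0 →
      0 < ∑ i, ∑ j, α i * α j * k (x i) (x j)

lemma gram_posDef {S : Type*} (k : S → S → ℝ) (hk : IsStrictPosDefKernel k)
    {r : ℕ} (u : Fin r → S) (hu : Function.Injective u) :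
    (gramMatrix k u).PosDef := by
  refine Matrix.posDef_iff_dotProduct_mulVec.mpr ⟨?_, ?_⟩
  · ext a b
    simp [gramMatrix, Matrix.conjTranspose_apply, hk.1 (u a) (u b)]
  · intro x hx
    simpa [gramMatrix, dotProduct, Matrix.mulVec, Finset.mul_sum, mul_assoc,
      mul_left_comm, mul_comm] using hk.2 r u x hu hx


/-- if `k` is strictly positive definite and `X̲` is a finite set of distinct
points, then for every `x ∈ S` with `x ∉ X̲` the Nyström approximation on the diagonal is
strictly below the original function: `k(x,X̲) k(X̲,X̲)⁻¹ k(X̲,x) < k(x,x)`. -/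
theorem nystrom_diag_lt {S : Type*} (k : S → S → ℝ)
    (hk : IsStrictPosDefKernel k)
    {r : ℕ} (u : Fin r → S) (hu : Function.Injective u) :
    ∀ x : S, x ∉ Set.range u → nystrom k u x x < k x x := by
  intro x hx
  set G := gramMatrix k u with hG
  have hpd : G.PosDef := gram_posDef k hk u hu
  have hdet : IsUnit G.det := isUnit_iff_ne_zero.mpr (ne_of_gt hpd.det_pos)
  have hGinv : G * G⁻¹ = 1 := Matrix.mul_nonsing_inv G hdet
  set v : Fin r → ℝ := fun a => k (u a) x with hv
  set c : Fin r → ℝ := G⁻¹.mulVec v with hc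
  -- G.mulVec c = v
  have hGc : G.mulVec c = v := by
    rw [hc, Matrix.mulVec_mulVec, hGinv, Matrix.one_mulVec]
  -- quadratic form positivity with y = cons x u, α = cons 1 (-c)
  set y : Fin (r + 1) → S := Fin.cons x u with hy
  set α : Fin (r + 1) → ℝ := Fin.cons 1 (-c) with hα
  have hyinj : Function.Injective y := by
    rw [hy, Fin.cons_injective_iff]; exact ⟨hx, hu⟩
  have hαne : α ≠ 0 := by
    intro h
    have : α 0 = 0 := by rw [h]; rfl
    simp [hα] at this
  have hpos := hk.2 (r + 1) y α hyinj hαne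
  -- expand
  have hsym := hk.1
  have hexp : (∑ i, ∑ j, α i * α j * k (y i) (y j))
      = k x x - ∑ a, c a * v a - ∑ a, c a * v a
        + ∑ a, ∑ b, c a * c b * G a b := by
    rw [Fin.sum_univ_succ]
    simp only [Fin.sum_univ_succ, hα, hy, Fin.cons_zero, Fin.cons_succ, Pi.neg_apply]
    have h1 : ∀ a, k x (u a) = v a := fun a => hsym x (u a)
    have h2 : ∀ a, k (u a) x = v a := fun a => rfl
    simp only [h1, h2]
    have hGab : ∀ a b, k (u a) (u b) = G a b := fun a b => rfl
    simp only [hGab, Finset.sum_add_distrib]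
    have e1 : ∑ a : Fin r, 1 * -c a * v a = -∑ a : Fin r, c a * v a := by
      rw [← Finset.sum_neg_distrib]; exact Finset.sum_congr rfl fun a _ => by ring
    have e2 : ∑ a : Fin r, -c a * 1 * v a = -∑ a : Fin r, c a * v a := by
      rw [← Finset.sum_neg_distrib]; exact Finset.sum_congr rfl fun a _ => by ring
    have e3 : ∑ a : Fin r, ∑ b : Fin r, -c a * -c b * G a b
        = ∑ a : Fin r, ∑ b : Fin r, c a * c b * G a b :=
      Finset.sum_congr rfl fun a _ => Finset.sum_congr rfl fun b _ => by ring
    rw [e1, e2, e3]; ring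
  have hquad : ∑ a, ∑ b, c a * c b * G a b = ∑ a, c a * v a := by
    have : ∀ a, ∑ b, c a * c b * G a b = c a * v a := by
      intro a
      have : (G.mulVec c) a = v a := by rw [hGc]
      calc ∑ b, c a * c b * G a b = c a * ∑ b, G a b * c b := by
            rw [Finset.mul_sum]; apply Finset.sum_congr rfl; intro b _; ring
        _ = c a * v a := by rw [← this]; rfl
    simp only [this]
  have key : 0 < k x x - ∑ a, c a * v a := by
    have := hpos
    rw [hexp, hquad] at this
    linarith
  have hnys : nystrom k u x x = ∑ a, c a * v a := by
    unfold nystrom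
    rw [← hG]
    have : ∀ a, ∑ b, k x (u a) * G⁻¹ a b * k (u b) x = v a * c a := by
      intro a
      have h1 : k x (u a) = v a := hsym x (u a)
      calc ∑ b, k x (u a) * G⁻¹ a b * k (u b) x = v a * ∑ b, G⁻¹ a b * v b := by
            rw [Finset.mul_sum]; apply Finset.sum_congr rfl; intro b _; rw [h1]; ring
        _ = v a * c a := rfl
    simp only [this]
    apply Finset.sum_congr rfl; intro a _; ring
  rw [hnys]; linarith
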